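/- (Interval-width bounding for Jacobian sign-stable mappings.) Let X ⊆ ℝⁿ be convex and let f : X → ℝᵖ be differentiable with J̲ ≤ J_f(x) ≤ J̄ entrywise for all x ∈ X, where J̲, J̄ ∈ ℝ^{p×n}. Let H ∈ ℝ^{p×n} satisfy H_{ij} ∈ {J̲_{ij}, J̄_{ij}} for every (i,j), and set μ(x) := f(x) − H x. For each i ∈ {1,…,p}, let D_i be the diagonal 0/1 matrix with (D_i)_{jj} = 1 if (J̄ − H)_{ij} ≥ 0 and (D_i)_{jj} = 0 otherwise. Define F̄_μ := 2·max(J̄ − H, 0) − J̲ + H (entrywise maximum). Then for all x̲ ≤ x̄ with the interval [x̲, x̄] contained in X, and for every i ∈ {1,…,p}: μ_i(D_i x̄ + (I − D_i) x̲) − μ_i(D_i x̲ + (I − D_i) x̄) ≤ (F̄_μ (x̄ − x̲))_i. -/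

import Mathlib

open Matrix

/-- Entrywise positive part `M⁺ = max(M,0)`. -/
noncomputable def entPos {p n : ℕ} (M : Matrix (Fin p) (Fin n) ℝ) : Matrix (Fin p) (Fin n) ℝ :=
  Matrix.of fun i j => max (M i j) 0

/-- Entrywise negative part `M⁻ = M⁺ - M`. -/
noncomputable def entNeg {p n : ℕ} (M : Matrix (Fin p) (Fin n) ℝ) : Matrix (Fin p) (Fin n) ℝ :=
  entPos M - M

/-- Entrywise absolute value `|M| = M⁺ + M⁻`. -/
noncomputable def entAbs {p n : ℕ} (M : Matrix (Fin p) (Fin n) ℝ) : Matrix (Fin p) (Fin n) ℝ :=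
  entPos M + entNeg M

/-- `M^d`: the diagonal matrix with the same diagonal as `M`. -/
def diagPart {n : ℕ} (M : Matrix (Fin n) (Fin n) ℝ) : Matrix (Fin n) (Fin n) ℝ :=
  Matrix.diagonal fun i => M i i

/-- `M^{nd} = M - M^d`. -/
def offDiagPart {n : ℕ} (M : Matrix (Fin n) (Fin n) ℝ) : Matrix (Fin n) (Fin n) ℝ := M - diagPart M

/-- `M^m = M^d + |M^{nd}|`. -/
noncomputable def metzPart {n : ℕ} (M : Matrix (Fin n) (Fin n) ℝ) : Matrix (Fin n) (Fin n) ℝ :=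
  diagPart M + entAbs (offDiagPart M)

/-- A square real matrix is Metzler if all off-diagonal entries are nonnegative. -/
def Metzler {n : ℕ} (M : Matrix (Fin n) (Fin n) ℝ) : Prop := ∀ i j, i ≠ j → 0 ≤ M i j

/-- `gd` is a (discrete-time mixed-monotone) decomposition function of `g`. -/
def IsDecompositionFunction {n p : ℕ} (g : (Fin n → ℝ) → Fin p → ℝ)
    (gd : (Fin n → ℝ) → (Fin n → ℝ) → Fin p → ℝ) : Prop :=
  (∀ x, gd x x = g x) ∧
  (∀ x x' x₂, x ≤ x' → gd x x₂ ≤ gd x' x₂) ∧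
  (∀ x x' x₁, x ≤ x' → gd x₁ x' ≤ gd x₁ x)

/-- interval-width bounding for Jacobian sign-stable mappings. -/
theorem statement12 {n p : ℕ} (X : Set (Fin n → ℝ)) (hX : Convex ℝ X)
    (f : (Fin n → ℝ) → Fin p → ℝ)
    (Jf : (Fin n → ℝ) → Matrix (Fin p) (Fin n) ℝ)
    (hderiv : ∀ x ∈ X, HasFDerivWithinAt f (LinearMap.toContinuousLinearMap (Jf x).mulVecLin) X x)
    (Jlo Jhi : Matrix (Fin p) (Fin n) ℝ)
    (hJ : ∀ x ∈ X, ∀ i j, Jlo i j ≤ Jf x i j ∧ Jf x i j ≤ Jhi i j)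
    (H : Matrix (Fin p) (Fin n) ℝ)
    (hH : ∀ i j, H i j = Jlo i j ∨ H i j = Jhi i j)
    (μ : (Fin n → ℝ) → Fin p → ℝ) (hμ : ∀ x, μ x = f x - H.mulVec x)
    (D : Fin p → Matrix (Fin n) (Fin n) ℝ)
    (hD : ∀ i, D i = Matrix.diagonal fun j => if 0 ≤ (Jhi - H) i j then (1 : ℝ) else 0)
    (F : Matrix (Fin p) (Fin n) ℝ)
    (hF : F = (2 : ℝ) • entPos (Jhi - H) - Jlo + H)
    (xlo xhi : Fin n → ℝ) (hle : xlo ≤ xhi)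
    (hsub : ∀ z : Fin n → ℝ, xlo ≤ z → z ≤ xhi → z ∈ X) :
    ∀ i : Fin p,
      μ ((D i).mulVec xhi + ((1 : Matrix (Fin n) (Fin n) ℝ) - D i).mulVec xlo) i
        - μ ((D i).mulVec xlo + ((1 : Matrix (Fin n) (Fin n) ℝ) - D i).mulVec xhi) i
      ≤ F.mulVec (xhi - xlo) i := by
  intro i
  have hxloX : xlo ∈ X := hsub xlo le_rfl hle
  have hlohi : ∀ j, Jlo i j ≤ Jhi i j := fun j =>
    le_trans (hJ xlo hxloX i j).1 (hJ xlo hxloX i j).2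
  set a := (D i).mulVec xhi + ((1 : Matrix (Fin n) (Fin n) ℝ) - D i).mulVec xlo with ha
  set b := (D i).mulVec xlo + ((1 : Matrix (Fin n) (Fin n) ℝ) - D i).mulVec xhi with hb
  have haj : ∀ j, a j = if 0 ≤ (Jhi - H) i j then xhi j else xlo j := by
    intro j
    simp only [ha, hD, Pi.add_apply, Matrix.sub_mulVec, Matrix.one_mulVec,
      Matrix.mulVec_diagonal, Pi.sub_apply]
    split_ifs <;> ring
  have hbj : ∀ j, b j = if 0 ≤ (Jhi - H) i j then xlo j else xhi j := by
    intro j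
    simp only [hb, hD, Pi.add_apply, Matrix.sub_mulVec, Matrix.one_mulVec,
      Matrix.mulVec_diagonal, Pi.sub_apply]
    split_ifs <;> ring
  have hamem : ∀ j, xlo j ≤ a j ∧ a j ≤ xhi j := by
    intro j; rw [haj j]; split_ifs <;> exact ⟨by first | exact hle j | rfl, by first | exact hle j | rfl⟩
  have hbmem : ∀ j, xlo j ≤ b j ∧ b j ≤ xhi j := by
    intro j; rw [hbj j]; split_ifs <;> exact ⟨by first | exact hle j | rfl, by first | exact hle j | rfl⟩
  set γ : ℝ → (Fin n → ℝ) := fun t => b + t • (a - b) with hγ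
  have hγmem : ∀ t ∈ Set.Icc (0:ℝ) 1, γ t ∈ X := by
    intro t ht
    refine hsub _ (fun j => ?_) (fun j => ?_)
    · have h1 := (hamem j).1; have h2 := (hbmem j).1
      simp only [hγ, Pi.add_apply, Pi.smul_apply, Pi.sub_apply, smul_eq_mul]
      nlinarith [ht.1, ht.2]
    · have h1 := (hamem j).2; have h2 := (hbmem j).2
      simp only [hγ, Pi.add_apply, Pi.smul_apply, Pi.sub_apply, smul_eq_mul]
      nlinarith [ht.1, ht.2]
  have hγderiv : ∀ t : ℝ, HasDerivWithinAt γ (a - b) (Set.Icc (0:ℝ) 1) t := by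
    intro t
    have := (((hasDerivAt_id t).smul_const (a - b)).const_add b).hasDerivWithinAt
      (s := Set.Icc (0:ℝ) 1)
    simpa [hγ] using this
  set φ : ℝ → ℝ := fun t => μ (γ t) i with hφdef
  set φ' : ℝ → ℝ := fun t => ((Jf (γ t) - H).mulVec (a - b)) i with hφ'def
  have hφderiv : ∀ t ∈ Set.Icc (0:ℝ) 1, HasDerivWithinAt φ (φ' t) (Set.Icc (0:ℝ) 1) t := by
    intro t ht
    have hf1 : HasDerivWithinAt (fun s => f (γ s)) ((Jf (γ t)).mulVec (a - b))
        (Set.Icc (0:ℝ) 1) t :=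
      (hderiv (γ t) (hγmem t ht)).comp_hasDerivWithinAt t (hγderiv t) hγmem
    have hf2 : HasDerivWithinAt (fun s => H.mulVec (γ s)) (H.mulVec (a - b))
        (Set.Icc (0:ℝ) 1) t :=
      (LinearMap.toContinuousLinearMap H.mulVecLin).hasFDerivAt.comp_hasDerivWithinAt t
        (hγderiv t)
    have hsub' := hf1.sub hf2
    have := (hasDerivWithinAt_pi.1 hsub') i
    have heq : (fun s => f (γ s) - H.mulVec (γ s)) = fun s => μ (γ s) := by
      funext s; rw [hμ]
    clear heq
    simp only [hφdef, hμ]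
    simpa [hφdef, hφ'def, Matrix.sub_mulVec] using this
  set C : ℝ := F.mulVec (xhi - xlo) i with hC
  have hbound : ∀ t ∈ Set.Ico (0:ℝ) 1, ‖φ' t‖ ≤ C := by
    intro t ht
    have hmem : γ t ∈ X := hγmem t ⟨ht.1, le_of_lt ht.2⟩
    have habs : ∀ j, |(Jf (γ t) - H) i j * (a j - b j)| ≤ F i j * (xhi j - xlo j) := by
      intro j
      have hJl := (hJ (γ t) hmem i j).1
      have hJh := (hJ (γ t) hmem i j).2
      have hab : |a j - b j| = xhi j - xlo j := by
        rw [haj j, hbj j]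
        split_ifs
        · rw [abs_of_nonneg (by linarith [hle j])]
        · rw [abs_of_nonpos (by linarith [hle j])]; ring
      rw [abs_mul, hab]
      have hF' : F i j = 2 * max (Jhi i j - H i j) 0 - Jlo i j + H i j := by
        rw [hF]
        simp only [Matrix.add_apply, Matrix.sub_apply, Matrix.smul_apply, entPos,
          Matrix.of_apply, smul_eq_mul]
        try ring
      have hM1 := le_max_left (Jhi i j - H i j) (0:ℝ)
      have hM2 := le_max_right (Jhi i j - H i j) (0:ℝ)
      have habs' : |(Jf (γ t) - H) i j| ≤ F i j := by
        rw [Matrix.sub_apply, abs_le, hF']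
        constructor <;> nlinarith [hlohi j]
      exact mul_le_mul_of_nonneg_right habs' (by linarith [hle j]) |>.trans_eq' rfl
    calc ‖φ' t‖ = |∑ j, (Jf (γ t) - H) i j * (a j - b j)| := by
          simp [hφ'def, Matrix.mulVec, dotProduct, Real.norm_eq_abs, mul_sub, Finset.sum_sub_distrib]
      _ ≤ ∑ j, |(Jf (γ t) - H) i j * (a j - b j)| := Finset.abs_sum_le_sum_abs _ _
      _ ≤ ∑ j, F i j * (xhi j - xlo j) := Finset.sum_le_sum fun j _ => habs j
      _ = C := by simp [hC, Matrix.mulVec, dotProduct, mul_sub, Finset.sum_sub_distrib]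
  have hkey := norm_image_sub_le_of_norm_deriv_le_segment' hφderiv hbound 1
    (Set.right_mem_Icc.2 zero_le_one)
  have hφ1 : φ 1 = μ a i := by simp [hφdef, hγ]
  have hφ0 : φ 0 = μ b i := by simp [hφdef, hγ]
  rw [hφ1, hφ0, Real.norm_eq_abs] at hkey
  have := abs_le.1 (by simpa using hkey)
  linarith [this.2]
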